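/- In Ł_{n+1} = {k/n : 0 ≤ k ≤ n}, the n-fold iteration of the square operator * coincides with the Baaz-Monteiro Delta: *^n x = 1 if x = 1 and *^n x = 0 if x < 1, for all x in Ł_{n+1}. -/

import Mathlib

lemma iter_formula (j : ℕ) (x : ℝ) (hx : 0 ≤ x) :
    (fun y : ℝ => max 0 (2 * y - 1))^[j] x = max 0 (2 ^ j * x - (2 ^ j - 1)) := by
  induction j with
  | zero => simp [hx]
  | succ j ih =>
    rw [Function.iterate_succ_apply', ih]
    rcases le_or_gt (2 ^ j * x - (2 ^ j - 1)) 0 with h | h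
    · rw [max_eq_left h]
      have : (2:ℝ) ^ (j+1) * x - (2 ^ (j+1) - 1) ≤ 0 := by
        rw [pow_succ]; nlinarith
      simp [max_eq_left this, this]
    · rw [max_eq_right h.le]
      have : 2 * (2 ^ j * x - (2 ^ j - 1)) - 1 = (2:ℝ) ^ (j+1) * x - (2 ^ (j+1) - 1) := by
        rw [pow_succ]; ring
      simp [this]

theorem iterate_square_is_delta (n : ℕ) (hn : 0 < n) (k : ℕ) (hk : k ≤ n) :
    (fun y : ℝ => max 0 (2 * y - 1))^[n] ((k : ℝ) / n) =
      if (k : ℝ) / n = 1 then 1 else 0 := by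
  have hn' : (0:ℝ) < n := by exact_mod_cast hn
  have hx : (0:ℝ) ≤ (k:ℝ)/n := by positivity
  rw [iter_formula n _ hx]
  rcases eq_or_lt_of_le hk with rfl | hlt
  · rw [div_self hn'.ne', if_pos rfl]
    have : (1:ℝ) ≤ 2 ^ k := one_le_pow₀ (by norm_num)
    norm_num
  · have hkr : (k:ℝ) ≤ n - 1 := by
      have : (k:ℝ) + 1 ≤ n := by exact_mod_cast hlt
      linarith
    have hne : (k:ℝ)/n ≠ 1 := by
      intro h
      have h2 : (k:ℝ) = n := by field_simp at h; exact_mod_cast h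
      exact absurd (Nat.cast_injective h2) hlt.ne
    rw [if_neg hne, max_eq_left]
    have h2n : (n:ℝ) ≤ 2 ^ n := by exact_mod_cast Nat.le_of_lt (Nat.lt_two_pow_self (n := n))
    have hmul : 2 ^ n * ((k:ℝ)/n) ≤ 2 ^ n * (((n:ℝ)-1)/n) := by
      gcongr
    have : 2 ^ n * (((n:ℝ)-1)/n) = 2^n - 2^n/n := by field_simp
    have hd : (1:ℝ) ≤ 2^n / n := (one_le_div hn').mpr h2n
    linarith [hmul, this]
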